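/- Let S be a distributive join-semilattice with zero and let δ : X × X → S be a surjective S-valued distance. Given x, y ∈ X and a', b' ∈ S with δ(x,y) = a' ∨ b', let X' = X ∪ {u, v} with two new points, and extend δ to δ' : X' × X' → S by δ'(z,u) = δ(z,x) ∨ a', δ'(z,v) = δ(z,y) ∨ a' for z ∈ X, and δ'(u,v) = b'. Then δ' is an S-valued distance on X' extending δ, with δ'(x,u) = a', δ'(u,v) = b', δ'(v,y) = a'. -/
import Mathlib


/-- A join-semilattice with zero is distributive if whenever `c ≤ a ⊔ b` there
are `a' ≤ a` and `b' ≤ b` with `c = a' ⊔ b'`. -/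
def IsDistribSemilattice (S : Type*) [SemilatticeSup S] [OrderBot S] : Prop :=
  ∀ a b c : S, c ≤ a ⊔ b → ∃ a' b' : S, a' ≤ a ∧ b' ≤ b ∧ c = a' ⊔ b'

/-- An `S`-valued distance on `X`. -/
def IsSDistance {X : Type*} {S : Type*} [SemilatticeSup S] [OrderBot S]
    (δ : X → X → S) : Prop :=
  (∀ x, δ x x = ⊥) ∧ (∀ x y, δ x y = δ y x) ∧
    (∀ x y z, δ x z ≤ δ x y ⊔ δ y z)

/-- The extension of `δ` to `X' = X ∪ {u, v}` (here `u = Sum.inr false`,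
`v = Sum.inr true`), defined by `δ'(z,u) = δ(z,x) ⊔ a'`, `δ'(z,v) = δ(z,y) ⊔ a'`
for `z ∈ X`, and `δ'(u,v) = b'`. -/
def extDistance {X : Type*} {S : Type*} [SemilatticeSup S] [OrderBot S]
    (δ : X → X → S) (x y : X) (a' b' : S) : X ⊕ Bool → X ⊕ Bool → S
  | Sum.inl p, Sum.inl q => δ p q
  | Sum.inl p, Sum.inr false => δ p x ⊔ a'
  | Sum.inr false, Sum.inl p => δ p x ⊔ a'
  | Sum.inl p, Sum.inr true => δ p y ⊔ a'
  | Sum.inr true, Sum.inl p => δ p y ⊔ a'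
  | Sum.inr false, Sum.inr true => b'
  | Sum.inr true, Sum.inr false => b'
  | Sum.inr false, Sum.inr false => ⊥
  | Sum.inr true, Sum.inr true => ⊥

/-- Given a surjective `S`-valued distance `δ` on `X` over a distributive
join-semilattice `S` with zero, and `x, y ∈ X`, `a', b' ∈ S` with
`δ(x,y) = a' ⊔ b'`, the extension `δ'` to `X' = X ∪ {u,v}` is an `S`-valued
distance extending `δ`, with `δ'(x,u) = a'`, `δ'(u,v) = b'`, `δ'(v,y) = a'`. -/
theorem extDistance_is_distance {X : Type*} {S : Type*} [SemilatticeSup S]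
    [OrderBot S] (hS : IsDistribSemilattice S) (δ : X → X → S)
    (hδ : IsSDistance δ) (hsurj : Function.Surjective fun p : X × X => δ p.1 p.2)
    (x y : X) (a' b' : S) (hab : δ x y = a' ⊔ b') :
    IsSDistance (extDistance δ x y a' b') ∧
    (∀ p q : X, extDistance δ x y a' b' (Sum.inl p) (Sum.inl q) = δ p q) ∧
    extDistance δ x y a' b' (Sum.inl x) (Sum.inr false) = a' ∧
    extDistance δ x y a' b' (Sum.inr false) (Sum.inr true) = b' ∧
    extDistance δ x y a' b' (Sum.inr true) (Sum.inl y) = a' := by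
  obtain ⟨h0, hsym, htri⟩ := hδ
  have ha : a' ≤ δ x y := hab ▸ le_sup_left
  have hb : b' ≤ δ x y := hab ▸ le_sup_right
  refine ⟨⟨?_, ?_, ?_⟩, fun p q => rfl, ?_, rfl, ?_⟩
  · rintro (p | (_|_)) <;> simp [extDistance, h0]
  · rintro (p | (_|_)) (q | (_|_)) <;> simp [extDistance]; try rw [hsym]
  · rintro (p | (_|_)) (q | (_|_)) (r | (_|_)) <;> simp only [extDistance]
    -- (l,l,l)
    · exact htri p q r
    -- (l,l,u)
    · exact sup_le (le_trans (htri p q x)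
        (sup_le le_sup_left (le_sup_of_le_right le_sup_left)))
        (le_sup_of_le_right le_sup_right)
    -- (l,l,v)
    · exact sup_le (le_trans (htri p q y)
        (sup_le le_sup_left (le_sup_of_le_right le_sup_left)))
        (le_sup_of_le_right le_sup_right)
    -- (l,u,l)
    · exact le_trans (htri p x r) (sup_le (le_sup_of_le_left le_sup_left)
        (by rw [hsym x r]; exact le_sup_of_le_right le_sup_left))
    -- (l,u,u)
    · exact le_sup_left
    -- (l,u,v)
    · refine sup_le (le_trans (htri p x y) ?_) (le_sup_of_le_left le_sup_right)
      rw [hab]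
      exact (sup_assoc _ _ _).symm.le
    -- (l,v,l)
    · exact le_trans (htri p y r) (sup_le (le_sup_of_le_left le_sup_left)
        (by rw [hsym y r]; exact le_sup_of_le_right le_sup_left))
    -- (l,v,u)
    · refine sup_le (le_trans (htri p y x) ?_) (le_sup_of_le_left le_sup_right)
      rw [hsym y x, hab]
      exact (sup_assoc _ _ _).symm.le
    -- (l,v,v)
    · exact le_sup_left
    -- (u,l,l)
    · exact sup_le (le_trans (htri r q x)
        (by rw [hsym r q]
            exact sup_le le_sup_right (le_sup_of_le_left le_sup_left)))
        (le_sup_of_le_left le_sup_right)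
    -- (u,l,u)
    · exact bot_le
    -- (u,l,v)
    · exact le_trans hb (le_trans (htri x q y) (sup_le
        (by rw [hsym x q]; exact le_sup_of_le_left le_sup_left)
        (le_sup_of_le_right le_sup_left)))
    -- (u,u,l)
    · exact le_sup_right
    -- (u,u,u)
    · exact bot_le
    -- (u,u,v)
    · exact le_sup_right
    -- (u,v,l)
    · refine sup_le (le_trans (htri r y x) (sup_le
        (le_sup_of_le_right le_sup_left) ?_)) (le_sup_of_le_right le_sup_right)
      rw [hsym y x, hab]
      exact sup_le (le_sup_of_le_right le_sup_right) le_sup_left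
    -- (u,v,u)
    · exact bot_le
    -- (u,v,v)
    · exact le_sup_left
    -- (v,l,l)
    · exact sup_le (le_trans (htri r q y)
        (by rw [hsym r q]
            exact sup_le le_sup_right (le_sup_of_le_left le_sup_left)))
        (le_sup_of_le_left le_sup_right)
    -- (v,l,u)
    · exact le_trans (hb.trans (hsym x y).le) (le_trans (htri y q x) (sup_le
        (by rw [hsym y q]; exact le_sup_of_le_left le_sup_left)
        (le_sup_of_le_right le_sup_left)))
    -- (v,l,v)
    · exact bot_le
    -- (v,u,l)
    · refine sup_le (le_trans (htri r x y) (sup_le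
        (le_sup_of_le_right le_sup_left) ?_)) (le_sup_of_le_right le_sup_right)
      rw [hab]
      exact sup_le (le_sup_of_le_right le_sup_right) le_sup_left
    -- (v,u,u)
    · exact le_sup_left
    -- (v,u,v)
    · exact bot_le
    -- (v,v,l)
    · exact le_sup_right
    -- (v,v,u)
    · exact le_sup_right
    -- (v,v,v)
    · exact bot_le
  · simp [extDistance, h0]
  · simp [extDistance, h0, hsym]
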